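/- arXiv:2001.02893 — 2 statements merged into one kernel-verified Lean document; each statement's English description precedes it below -/
import Mathlib

section
/- Let M and X be smooth manifolds, A ⊆ M a closed set, and f : M → X a continuous map that is smooth on A, i.e., there is an open set U ⊇ A such that the restriction of f to U is C^∞. Then there exists a smooth map g : M → X with g = f on A and a continuous homotopy H : M × [0,1] → X from f to g that is relative to A, i.e., H(a,t) = f(a) for all a ∈ A and t ∈ [0,1]. -/
/-!
Cover `M` by a locally finite sequence of compactly supported smooth bump functions `χ i`, each
supported in a set that `f` maps into a single chart of `X`. Step `i` changes the current map `h`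
only on the support of `χ i`: in the chart it moves `h x` along the segment towards `g x` by the
fraction `χ i x`, where `g` is a smooth approximation of the chart expression of `h` that agrees
with it on `A`. Over the support of every later bump the new map must still land in that bump's
chart; this is an open condition `Ω` on the graph, so on the compact support of `χ i` a uniform
approximation radius exists. The new map is smooth where `χ i = 1` and wherever `h` was, and
replacing `χ i` by `t * χ i` gives a homotopy rel `A`. Each point is moved by finitely many steps
only, so the maps stabilize locally to a smooth map, and running the `i`-th homotopy during
`[1 - 2⁻ⁱ, 1 - 2⁻ⁱ⁻¹]` gives a continuous homotopy rel `A` from `f` to it.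
-/

open Set Metric Filter AffineMap
open scoped Manifold Topology unitInterval ContDiff

theorem isOpen_setOf_forall_mem_imp_mem {ι α β : Type*} [TopologicalSpace α]
    [TopologicalSpace β] {K : ι → Set α} {S : ι → Set β} (hK : LocallyFinite K)
    (hKc : ∀ i, IsClosed (K i)) (hS : ∀ i, IsOpen (S i)) :
    IsOpen {p : α × β | ∀ i, p.1 ∈ K i → p.2 ∈ S i} := by
  have : {p : α × β | ∀ i, p.1 ∈ K i → p.2 ∈ S i} = (⋃ i, K i ×ˢ (S i)ᶜ)ᶜ := by
    ext p
    simp [imp_iff_not_or]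
  rw [this]
  exact ((hK.prod_right _).isClosed_iUnion fun i => (hKc i).prod (hS i).isClosed_compl).isOpen_compl

theorem IsCompact.exists_pos_forall_dist_snd_lt_mem {α β : Type*} [TopologicalSpace α]
    [TopologicalSpace.PseudoMetrizableSpace α] [PseudoMetricSpace β] {K W : Set (α × β)}
    (hK : IsCompact K) (hW : IsOpen W) (hKW : K ⊆ W) :
    ∃ ρ > 0, ∀ p ∈ K, ∀ b, dist b p.2 < ρ → (p.1, b) ∈ W := by
  let := TopologicalSpace.pseudoMetrizableSpacePseudoMetric α
  obtain ⟨ρ, hρ, hKρ⟩ := hK.exists_thickening_subset_open hW hKW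
  refine ⟨ρ, hρ, fun p hp b hb => hKρ (mem_thickening_iff.2 ⟨p, hp, ?_⟩)⟩
  simpa [Prod.dist_eq] using hb

theorem exists_seq_of_forall_exists_step {α β : Type*} {P : ℕ → α → Prop}
    {R : ℕ → α → β → Prop} (next : β → α) {a₀ : α} (h₀ : P 0 a₀)
    (hstep : ∀ i a, P i a → ∃ b, R i a b ∧ P (i + 1) (next b)) :
    ∃ (a : ℕ → α) (b : ℕ → β), a 0 = a₀ ∧
      ∀ i, P i (a i) ∧ R i (a i) (b i) ∧ a (i + 1) = next (b i) := by
  choose B hB using hstep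
  let s : ∀ i, {a : α // P i a} := fun i =>
    Nat.rec ⟨a₀, h₀⟩ (fun i a => ⟨next (B i a.1 a.2), (hB i a.1 a.2).2⟩) i
  exact ⟨fun i => (s i).1, fun i => B i (s i).1 (s i).2, rfl,
    fun i => ⟨(s i).2, (hB i (s i).1 (s i).2).1, rfl⟩⟩

noncomputable def stageStart (i : ℕ) : ℝ := 1 - (2 ^ i)⁻¹

theorem stageStart_zero : stageStart 0 = 0 := by simp [stageStart]

theorem stageStart_le_one (i : ℕ) : stageStart i ≤ 1 := by
  have : (0 : ℝ) ≤ (2 ^ i)⁻¹ := by positivity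
  simp only [stageStart]
  linarith

theorem stageStart_succ_sub_mul (i : ℕ) :
    (stageStart (i + 1) - stageStart i) * 2 ^ (i + 1) = 1 := by
  simp only [stageStart]
  field_simp
  ring

theorem stageStart_lt_succ (i : ℕ) : stageStart i < stageStart (i + 1) := by
  have h := stageStart_succ_sub_mul i
  by_contra! h'
  nlinarith [pow_pos (two_pos (α := ℝ)) (i + 1)]

theorem stageStart_nonneg (i : ℕ) : 0 ≤ stageStart i := by
  induction i with
  | zero => rw [stageStart_zero]
  | succ i ih => exact ih.trans (stageStart_lt_succ i).le

section Concat

variable {M X : Type*}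

noncomputable def concatStages (h : ℕ → M → X) (F : ℕ → M × I → X) : ℕ → M × I → X
  | 0 => fun p => h 0 p.1
  | i + 1 => fun p =>
    if (p.2 : ℝ) ≤ stageStart i then concatStages h F i p
    else F i (p.1, projIcc 0 1 zero_le_one ((p.2 - stageStart i) * 2 ^ (i + 1)))

variable {h : ℕ → M → X} {F : ℕ → M × I → X}

theorem concatStages_of_stageStart_le (hF1 : ∀ i x, F i (x, 1) = h (i + 1) x) {i : ℕ}
    {x : M} {t : I} (ht : stageStart i ≤ t) : concatStages h F i (x, t) = h i x := by
  induction i with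
  | zero => rfl
  | succ i _ =>
    have hlt : stageStart i < t := (stageStart_lt_succ i).trans_le ht
    have hone : 1 ≤ ((t : ℝ) - stageStart i) * 2 ^ (i + 1) := by
      rw [← stageStart_succ_sub_mul i]
      gcongr
    simp only [concatStages, if_neg hlt.not_ge, projIcc_of_right_le _ hone]
    exact hF1 i x

theorem concatStages_zero (i : ℕ) (x : M) : concatStages h F i (x, 0) = h 0 x := by
  induction i with
  | zero => rfl
  | succ i ih => simpa [concatStages, stageStart_nonneg i] using ih

theorem concatStages_succ_of_forall_eq (hF1 : ∀ i x, F i (x, 1) = h (i + 1) x) {i : ℕ}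
    {x : M} (hx : ∀ t, F i (x, t) = h i x) (t : I) :
    concatStages h F (i + 1) (x, t) = concatStages h F i (x, t) := by
  simp only [concatStages]
  split_ifs with ht
  · rfl
  · rw [hx, concatStages_of_stageStart_le hF1 (not_le.1 ht).le]

theorem concatStages_eq_of_forall_eq {x : M} (hx : ∀ i t, F i (x, t) = h 0 x) (i : ℕ)
    (t : I) : concatStages h F i (x, t) = h 0 x := by
  induction i with
  | zero => rfl
  | succ i ih =>
    simp only [concatStages]
    split_ifs
    exacts [ih, hx i _]

variable [TopologicalSpace M] [TopologicalSpace X]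

theorem continuous_concatStages (hF : ∀ i, Continuous (F i)) (hF0 : ∀ i x, F i (x, 0) = h i x)
    (hF1 : ∀ i x, F i (x, 1) = h (i + 1) x) (i : ℕ) : Continuous (concatStages h F i) := by
  induction i with
  | zero =>
    simp only [concatStages, ← hF0 0]
    exact (hF 0).comp (continuous_fst.prodMk continuous_const)
  | succ i ih =>
    have htime : Continuous fun p : M × I => (p.2 : ℝ) := continuous_subtype_val.comp continuous_snd
    refine Continuous.if_le ih ((hF i).comp (continuous_fst.prodMk (continuous_projIcc.comp
      ((htime.sub continuous_const).mul continuous_const)))) htime continuous_const ?_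
    rintro ⟨x, t⟩ (ht : (t : ℝ) = stageStart i)
    simp only [ht, sub_self, zero_mul, concatStages_of_stageStart_le hF1 ht.ge]
    rw [projIcc_left, ← hF0]
    rfl

theorem exists_homotopy_to_limit_of_locallyFinite {V : ℕ → Set M} (hV : LocallyFinite V)
    (hF : ∀ i, Continuous (F i)) (hF0 : ∀ i x, F i (x, 0) = h i x)
    (hF1 : ∀ i x, F i (x, 1) = h (i + 1) x) (hFV : ∀ i, ∀ x ∉ V i, ∀ t, F i (x, t) = h i x) :
    ∃ H : M × I → X, Continuous H ∧ (∀ x, H (x, 0) = h 0 x) ∧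
      (∀ x, ∀ᶠ i in atTop, h i =ᶠ[𝓝 x] fun y => H (y, 1)) ∧
      ∀ x, (∀ i t, F i (x, t) = h 0 x) → ∀ t, H (x, t) = h 0 x := by
  have hlf : LocallyFinite fun i => {p | concatStages h F (i + 1) p ≠ concatStages h F i p} :=
    (hV.preimage_continuous continuous_fst).subset fun i p hp => by_contra fun hpV =>
      hp (concatStages_succ_of_forall_eq hF1 (hFV i p.1 hpV) p.2)
  obtain ⟨H, hH⟩ := hlf.exists_forall_eventually_atTop_eventuallyEq
  refine ⟨H, continuous_iff_continuousAt.2 fun p => ?_, fun x => ?_, fun x => ?_,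
    fun x hx t => ?_⟩
  · obtain ⟨i, hi⟩ := (hH p).exists
    exact (continuous_concatStages hF hF0 hF1 i).continuousAt.congr hi
  · obtain ⟨i, hi⟩ := (hH (x, 0)).exists
    rw [← hi.eq_of_nhds, concatStages_zero]
  · have hslice : Tendsto (fun y : M => (y, (1 : I))) (𝓝 x) (𝓝 (x, 1)) :=
      (continuous_id.prodMk continuous_const).tendsto x
    filter_upwards [hH (x, 1)] with i hi
    filter_upwards [hi.comp_tendsto hslice] with y hy
    rw [← concatStages_of_stageStart_le (t := 1) hF1 (stageStart_le_one i)]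
    exact hy
  · obtain ⟨i, hi⟩ := (hH (x, t)).exists
    rw [← hi.eq_of_nhds, concatStages_eq_of_forall_eq hx]

end Concat

section Manifold

variable {E : Type*} [NormedAddCommGroup E] [NormedSpace ℝ E]
  {H : Type*} [TopologicalSpace H] {IM : ModelWithCorners ℝ E H} {M : Type*}
  {E' : Type*} [NormedAddCommGroup E'] [NormedSpace ℝ E']
  {H' : Type*} [TopologicalSpace H'] {IX : ModelWithCorners ℝ E' H'}
  {X : Type*} [TopologicalSpace X] [ChartedSpace H' X]

-- Branching on the chart source rather than on `tsupport χ` makes the chart formula valid on an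
-- open neighbourhood of every point where it is used.
variable (IX) in
open Classical in
noncomputable def chartBlend (c : X) (h : M → X) (χ : M → ℝ) (g : M → E') (p : M × I) : X :=
  if h p.1 ∈ (extChartAt IX c).source then
    (extChartAt IX c).symm (lineMap (extChartAt IX c (h p.1)) (g p.1) ((p.2 : ℝ) * χ p.1))
  else h p.1

section chartBlend

variable {c : X} {h : M → X} {χ : M → ℝ} {g : M → E'}

theorem chartBlend_of_lineMap_eq {x : M} {t : I}
    (hx : lineMap (extChartAt IX c (h x)) (g x) ((t : ℝ) * χ x) = extChartAt IX c (h x)) :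
    chartBlend IX c h χ g (x, t) = h x := by
  unfold chartBlend
  split_ifs with hs
  · rw [hx, (extChartAt IX c).left_inv hs]
  · rfl

theorem chartBlend_zero (x : M) : chartBlend IX c h χ g (x, 0) = h x :=
  chartBlend_of_lineMap_eq (by simp)

theorem chartBlend_of_eq {x : M} (hx : g x = extChartAt IX c (h x)) (t : I) :
    chartBlend IX c h χ g (x, t) = h x :=
  chartBlend_of_lineMap_eq (by simp [hx])

theorem chartBlend_of_mem_source {x : M} (hx : h x ∈ (extChartAt IX c).source) (t : I) :
    chartBlend IX c h χ g (x, t) =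
      (extChartAt IX c).symm (lineMap (extChartAt IX c (h x)) (g x) ((t : ℝ) * χ x)) :=
  if_pos hx

variable [TopologicalSpace M]

theorem chartBlend_of_notMem_tsupport {x : M} (hx : x ∉ tsupport χ) (t : I) :
    chartBlend IX c h χ g (x, t) = h x :=
  chartBlend_of_lineMap_eq (by simp [image_eq_zero_of_notMem_tsupport hx])

theorem lineMap_mem_extChartAt_target (hχ01 : ∀ x, χ x ∈ Icc 0 1)
    (hseg : ∀ x ∈ tsupport χ, segment ℝ (extChartAt IX c (h x)) (g x) ⊆ (extChartAt IX c).target)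
    {x : M} (hx : h x ∈ (extChartAt IX c).source) (t : I) :
    lineMap (extChartAt IX c (h x)) (g x) ((t : ℝ) * χ x) ∈ (extChartAt IX c).target := by
  by_cases hxs : x ∈ tsupport χ
  · exact hseg x hxs (lineMap_mem_segment (𝕜 := ℝ) _ _ (unitInterval.mul_mem t.2 (hχ01 x)))
  · simpa [image_eq_zero_of_notMem_tsupport hxs] using (extChartAt IX c).map_source hx

theorem chartBlend_eventuallyEq_of_mem_source (hh : Continuous h) {x : M}
    (hx : h x ∈ (extChartAt IX c).source) (t : I) :
    chartBlend IX c h χ g =ᶠ[𝓝 (x, t)] fun p =>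
      (extChartAt IX c).symm (lineMap (extChartAt IX c (h p.1)) (g p.1) ((p.2 : ℝ) * χ p.1)) := by
  filter_upwards [(hh.comp continuous_fst).continuousAt.preimage_mem_nhds
    ((isOpen_extChartAt_source c).mem_nhds hx)] with p hp
  exact if_pos hp

theorem chartBlend_eventuallyEq_of_notMem_tsupport {x : M} (hx : x ∉ tsupport χ) (t : I) :
    chartBlend IX c h χ g =ᶠ[𝓝 (x, t)] fun p => h p.1 := by
  filter_upwards [continuous_fst.continuousAt.preimage_mem_nhds
    ((isClosed_tsupport χ).isOpen_compl.mem_nhds hx)] with p hp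
  exact chartBlend_of_notMem_tsupport hp p.2

theorem continuous_chartBlend [IX.Boundaryless] (hh : Continuous h) (hχ : Continuous χ)
    (hg : Continuous g) (hχ01 : ∀ x, χ x ∈ Icc 0 1)
    (hsupp : tsupport χ ⊆ h ⁻¹' (extChartAt IX c).source)
    (hseg : ∀ x ∈ tsupport χ, segment ℝ (extChartAt IX c (h x)) (g x) ⊆ (extChartAt IX c).target) :
    Continuous (chartBlend IX c h χ g) := by
  refine continuous_iff_continuousAt.2 fun ⟨x, t⟩ => ?_
  by_cases hx : h x ∈ (extChartAt IX c).source
  · have hψh : ContinuousAt (fun p : M × I => extChartAt IX c (h p.1)) (x, t) :=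
      ContinuousAt.comp (f := fun p : M × I => h p.1) (continuousAt_extChartAt' hx)
        (hh.comp continuous_fst).continuousAt
    have hpath : ContinuousAt (fun p : M × I =>
        lineMap (extChartAt IX c (h p.1)) (g p.1) ((p.2 : ℝ) * χ p.1)) (x, t) :=
      hψh.lineMap (hg.comp continuous_fst).continuousAt (by fun_prop)
    have hsymm := (continuousOn_extChartAt_symm c).continuousAt
      ((isOpen_extChartAt_target c).mem_nhds (lineMap_mem_extChartAt_target hχ01 hseg hx t))
    exact (hsymm.comp_of_eq hpath rfl).congr (chartBlend_eventuallyEq_of_mem_source hh hx t).symm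
  · exact (hh.comp continuous_fst).continuousAt.congr
      (chartBlend_eventuallyEq_of_notMem_tsupport (fun hxs => hx (hsupp hxs)) t).symm

variable [ChartedSpace H M] {n : ℕ∞} [IsManifold IX n X] [IX.Boundaryless]

theorem contMDiffAt_chartBlend_one_of_contMDiffAt (hh : Continuous h)
    (hχ : ContMDiff IM 𝓘(ℝ) n χ) (hg : ContMDiff IM 𝓘(ℝ, E') n g) (hχ01 : ∀ x, χ x ∈ Icc 0 1)
    (hsupp : tsupport χ ⊆ h ⁻¹' (extChartAt IX c).source)
    (hseg : ∀ x ∈ tsupport χ, segment ℝ (extChartAt IX c (h x)) (g x) ⊆ (extChartAt IX c).target)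
    {x : M} (hx : ContMDiffAt IM IX n h x) :
    ContMDiffAt IM IX n (fun y => chartBlend IX c h χ g (y, 1)) x := by
  have hslice : Tendsto (fun y : M => (y, (1 : I))) (𝓝 x) (𝓝 (x, 1)) :=
    (continuous_id.prodMk continuous_const).tendsto x
  by_cases hxs : h x ∈ (extChartAt IX c).source
  · have hψh : ContMDiffAt IM 𝓘(ℝ, E') n (fun y => extChartAt IX c (h y)) x :=
      (contMDiffAt_extChartAt' (extChartAt_source IX c ▸ hxs)).comp x hx
    have hpath : ContMDiffAt IM 𝓘(ℝ, E') n
        (fun y => lineMap (extChartAt IX c (h y)) (g y) (((1 : I) : ℝ) * χ y)) x := by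
      simp only [lineMap_apply_module', Icc.coe_one, one_mul]
      exact ((hχ x).smul ((hg x).sub hψh)).add hψh
    have hsymm := (contMDiffOn_extChartAt_symm (n := n) c).contMDiffAt
      ((isOpen_extChartAt_target c).mem_nhds (lineMap_mem_extChartAt_target hχ01 hseg hxs 1))
    exact (hsymm.comp_of_eq hpath rfl).congr_of_eventuallyEq
      ((chartBlend_eventuallyEq_of_mem_source hh hxs 1).comp_tendsto hslice)
  · exact hx.congr_of_eventuallyEq ((chartBlend_eventuallyEq_of_notMem_tsupport
      (fun hxs' => hxs (hsupp hxs')) 1).comp_tendsto hslice)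

theorem contMDiffAt_chartBlend_one_of_eventuallyEq_one (hh : Continuous h)
    (hg : ContMDiff IM 𝓘(ℝ, E') n g) (hsupp : tsupport χ ⊆ h ⁻¹' (extChartAt IX c).source)
    (hseg : ∀ x ∈ tsupport χ, segment ℝ (extChartAt IX c (h x)) (g x) ⊆ (extChartAt IX c).target)
    {x : M} (hx : χ =ᶠ[𝓝 x] 1) :
    ContMDiffAt IM IX n (fun y => chartBlend IX c h χ g (y, 1)) x := by
  have hxs : x ∈ tsupport χ := subset_tsupport χ <| by
    rw [Function.mem_support, hx.eq_of_nhds]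
    exact one_ne_zero
  have hsymm := (contMDiffOn_extChartAt_symm (n := n) c).contMDiffAt
    ((isOpen_extChartAt_target c).mem_nhds (hseg x hxs (right_mem_segment ℝ _ _)))
  refine (hsymm.comp x (hg x)).congr_of_eventuallyEq ?_
  filter_upwards [(chartBlend_eventuallyEq_of_mem_source hh (hsupp hxs) 1).comp_tendsto
    ((continuous_id.prodMk continuous_const).tendsto x), hx] with y hy hy1
  refine hy.trans ?_
  simp [hy1]

end chartBlend

variable [TopologicalSpace M]

theorem exists_pos_forall_dist_lt_extChartAt_mem [TopologicalSpace.PseudoMetrizableSpace M]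
    [IX.Boundaryless] {Ω : Set (M × X)} (hΩ : IsOpen Ω) {h : M → X} (hh : Continuous h)
    {K : Set M} (hK : IsCompact K) {c : X} (hKc : K ⊆ h ⁻¹' (extChartAt IX c).source)
    (hKΩ : ∀ x ∈ K, (x, h x) ∈ Ω) :
    ∃ ρ > 0, ∀ x ∈ K, ∀ v, dist v (extChartAt IX c (h x)) < ρ →
      v ∈ (extChartAt IX c).target ∧ (x, (extChartAt IX c).symm v) ∈ Ω := by
  set ψ := extChartAt IX c
  have hL : IsCompact ((fun x => (x, ψ (h x))) '' K) := hK.image_of_continuousOn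
    (continuousOn_id.prodMk ((continuousOn_extChartAt c).comp hh.continuousOn hKc))
  have hW : IsOpen (univ ×ˢ ψ.target ∩ (fun q : M × E' => (q.1, ψ.symm q.2)) ⁻¹' Ω) :=
    (continuousOn_fst.prodMk ((continuousOn_extChartAt_symm c).comp continuousOn_snd
      fun q hq => hq.2)).isOpen_inter_preimage (isOpen_univ.prod (isOpen_extChartAt_target c)) hΩ
  obtain ⟨ρ, hρ, hρW⟩ := hL.exists_pos_forall_dist_snd_lt_mem hW <| by
    rintro _ ⟨x, hx, rfl⟩
    exact ⟨⟨trivial, ψ.map_source (hKc hx)⟩, by simpa [ψ.left_inv (hKc hx)] using hKΩ x hx⟩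
  exact ⟨ρ, hρ, fun x hx v hv =>
    have hxv := hρW _ (mem_image_of_mem _ hx) v hv
    ⟨hxv.1.2, hxv.2⟩⟩

variable [ChartedSpace H M] [FiniteDimensional ℝ E] [IsManifold IM ∞ M] [T2Space M]
  [SigmaCompactSpace M]

variable (IM) in
theorem exists_seq_smoothBump_subordinate [Nonempty M] (O : M → Set M)
    (hO : ∀ x, O x ∈ 𝓝 x) :
    ∃ (c : ℕ → M) (χ : ℕ → M → ℝ), (∀ i, ContMDiff IM 𝓘(ℝ) ∞ (χ i)) ∧
      (∀ i x, χ i x ∈ Icc 0 1) ∧ (∀ i, IsCompact (tsupport (χ i))) ∧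
      (∀ i, tsupport (χ i) ⊆ O (c i)) ∧ LocallyFinite (fun i => tsupport (χ i)) ∧
      ∀ x, ∃ i, χ i =ᶠ[𝓝 x] 1 := by
  obtain ⟨ι, fs, hfs⟩ :=
    SmoothBumpCovering.exists_isSubordinate IM isClosed_univ fun x _ => hO x
  have : Countable ι := countable_univ_iff.1 <|
    fs.locallyFinite.countable_univ fun i => (fs i).nonempty_support
  let := Encodable.ofCountable ι
  -- index `n` carries the bump numbered `n` by `encode`, or `0` if there is none
  let χ : Option ι → M → ℝ := fun o => o.elim 0 fun i => fs i
  have htsupport : ∀ o, tsupport (χ o) = o.elim' ∅ fun i => tsupport (fs i) := by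
    rintro (_ | i) <;> simp [χ]
  refine ⟨fun n => (Encodable.decode₂ ι n).elim (Classical.arbitrary M) fs.c,
    fun n => χ (Encodable.decode₂ ι n), fun n => ?_, fun n x => ?_, fun n => ?_, fun n => ?_, ?_,
    fun x => ⟨Encodable.encode (fs.ind x trivial), ?_⟩⟩
  · dsimp only
    rcases Encodable.decode₂ ι n with _ | i
    exacts [contMDiff_const (c := (0 : ℝ)), (fs i).contMDiff]
  · dsimp only
    rcases Encodable.decode₂ ι n with _ | i
    exacts [by simp [χ], (fs i).mem_Icc]
  · rw [htsupport]
    rcases Encodable.decode₂ ι n with _ | i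
    exacts [isCompact_empty, (fs i).hasCompactSupport]
  · rw [htsupport]
    dsimp only
    rcases Encodable.decode₂ ι n with _ | i
    exacts [empty_subset _, hfs i]
  · simp only [htsupport]
    refine (fs.locallyFinite.closure.option_elim' ∅).comp_injOn fun n₁ hn₁ n₂ _ h₁₂ => ?_
    obtain ⟨i, hi⟩ : ∃ i, Encodable.decode₂ ι n₁ = some i := by
      cases h : Encodable.decode₂ ι n₁
      exacts [by simp [h] at hn₁, ⟨_, rfl⟩]
    exact (Encodable.mem_decode₂.1 hi).symm.trans (Encodable.mem_decode₂.1 (h₁₂ ▸ hi))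
  · simpa [χ, Encodable.decode₂_encode] using fs.eventuallyEq_one x trivial

theorem exists_contMDiff_forall_dist_lt_and_eq {n : ℕ∞} {e : M → E'} {K A U : Set M}
    (hK : IsClosed K) (hA : IsClosed A) (he : ∀ x ∈ K, ContinuousAt e x) (hU : IsOpen U)
    (hAU : A ∩ K ⊆ U) (heU : ContMDiffOn IM 𝓘(ℝ, E') n e U) {ρ : ℝ} (hρ : 0 < ρ) :
    ∃ g : M → E', ContMDiff IM 𝓘(ℝ, E') n g ∧
      ∀ x ∈ K, dist (g x) (e x) < ρ ∧ (x ∈ A → g x = e x) := by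
  classical
  let t : M → Set E' := fun x =>
    if x ∈ K then (if x ∈ A then {e x} else ball (e x) ρ) else univ
  have ht : ∀ x v, v ∈ t x ↔ (x ∈ K → dist v (e x) < ρ ∧ (x ∈ A → v = e x)) := by
    intro x v
    by_cases hxK : x ∈ K <;> by_cases hxA : x ∈ A <;> simp +contextual [t, hxK, hxA, hρ]
  have hloc : ∀ x, ∃ V ∈ 𝓝 x, ∃ g : M → E', ContMDiffOn IM 𝓘(ℝ, E') n g V ∧
      ∀ y ∈ V, g y ∈ t y := by
    intro x
    by_cases hxK : x ∈ K
    · by_cases hxA : x ∈ A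
      · exact ⟨U, hU.mem_nhds (hAU ⟨hxA, hxK⟩), e, heU,
          fun y _ => (ht y (e y)).2 fun _ => ⟨by simpa using hρ, fun _ => rfl⟩⟩
      · refine ⟨Aᶜ ∩ e ⁻¹' ball (e x) ρ, inter_mem (hA.isOpen_compl.mem_nhds hxA)
          ((he x hxK).preimage_mem_nhds (ball_mem_nhds _ hρ)), fun _ => e x, contMDiffOn_const,
          fun y hy => (ht y (e x)).2 fun _ => ⟨?_, fun hyA => absurd hyA hy.1⟩⟩
        rw [dist_comm]
        exact hy.2
    · exact ⟨Kᶜ, hK.isOpen_compl.mem_nhds hxK, fun _ => 0, contMDiffOn_const,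
        fun y hy => (ht y 0).2 fun hyK => absurd hyK hy⟩
  have hconv : ∀ x, Convex ℝ (t x) := fun x => by
    simp only [t]
    split_ifs
    exacts [convex_singleton _, convex_ball _ _, convex_univ]
  obtain ⟨g, hg⟩ := exists_contMDiffMap_forall_mem_convex_of_local IM hconv hloc
  exact ⟨g, g.contMDiff, fun x hx => (ht x (g x)).1 (hg x) hx⟩

variable {n : ℕ∞} [IsManifold IX n X] [IX.Boundaryless]

theorem exists_homotopy_contMDiffAt_of_bump {Ω : Set (M × X)} (hΩ : IsOpen Ω) {h : M → X}
    (hh : Continuous h) (hhΩ : ∀ x, (x, h x) ∈ Ω) {A U : Set M} (hA : IsClosed A)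
    (hU : IsOpen U) (hAU : A ⊆ U) (hhU : ContMDiffOn IM IX n h U) (c : X) {χ : M → ℝ}
    (hχ : ContMDiff IM 𝓘(ℝ) n χ) (hχ01 : ∀ x, χ x ∈ Icc 0 1) (hχc : IsCompact (tsupport χ))
    (hχh : tsupport χ ⊆ h ⁻¹' (extChartAt IX c).source) :
    ∃ F : M × I → X, Continuous F ∧ (∀ x, F (x, 0) = h x) ∧ (∀ x, (x, F (x, 1)) ∈ Ω) ∧
      (∀ x, ContMDiffAt IM IX n h x → ContMDiffAt IM IX n (fun y => F (y, 1)) x) ∧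
      (∀ x, χ =ᶠ[𝓝 x] 1 → ContMDiffAt IM IX n (fun y => F (y, 1)) x) ∧
      (∀ a ∈ A, ∀ t, F (a, t) = h a) ∧ ∀ x ∉ tsupport χ, ∀ t, F (x, t) = h x := by
  have := Manifold.metrizableSpace IM M
  set ψ := extChartAt IX c
  obtain ⟨ρ, hρ, hρΩ⟩ :=
    exists_pos_forall_dist_lt_extChartAt_mem hΩ hh hχc hχh fun x _ => hhΩ x
  obtain ⟨g, hg, hgρ⟩ := exists_contMDiff_forall_dist_lt_and_eq (e := fun x => ψ (h x))
    (isClosed_tsupport χ) hA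
    (fun x hx => (continuousAt_extChartAt' (hχh hx)).comp hh.continuousAt)
    (hU.inter (hh.isOpen_preimage _ (isOpen_extChartAt_source c)))
    (fun x hx => ⟨hAU hx.1, hχh hx.2⟩)
    ((contMDiffOn_extChartAt (n := n)).comp (hhU.mono inter_subset_left)
      fun x hx => extChartAt_source IX c ▸ hx.2) hρ
  have hball : ∀ x ∈ tsupport χ, segment ℝ (ψ (h x)) (g x) ⊆ ball (ψ (h x)) ρ := fun x hx =>
    (convex_ball _ _).segment_subset (mem_ball_self hρ) (hgρ x hx).1
  have hseg : ∀ x ∈ tsupport χ, segment ℝ (ψ (h x)) (g x) ⊆ ψ.target := fun x hx v hv =>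
    (hρΩ x hx v (hball x hx hv)).1
  refine ⟨chartBlend IX c h χ g,
    continuous_chartBlend hh hχ.continuous hg.continuous hχ01 hχh hseg, chartBlend_zero,
    fun x => ?_, fun x => contMDiffAt_chartBlend_one_of_contMDiffAt hh hχ hg hχ01 hχh hseg,
    fun x => contMDiffAt_chartBlend_one_of_eventuallyEq_one hh hg hχh hseg, fun a ha t => ?_,
    fun x hx t => chartBlend_of_notMem_tsupport hx t⟩
  · by_cases hx : x ∈ tsupport χ
    · rw [chartBlend_of_mem_source (hχh hx)]
      exact (hρΩ x hx _ (hball x hx (lineMap_mem_segment (𝕜 := ℝ) _ _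
        (unitInterval.mul_mem unitInterval.one_mem (hχ01 x))))).2
    · rw [chartBlend_of_notMem_tsupport hx]
      exact hhΩ x
  · by_cases ha' : a ∈ tsupport χ
    · exact chartBlend_of_eq ((hgρ a ha').2 ha) t
    · exact chartBlend_of_notMem_tsupport ha' t

theorem exists_seq_homotopy_contMDiffAt [Nonempty M] {f : M → X} (hf : Continuous f)
    {A U : Set M} (hA : IsClosed A) (hU : IsOpen U) (hAU : A ⊆ U)
    (hfU : ContMDiffOn IM IX n f U) :
    ∃ (h : ℕ → M → X) (F : ℕ → M × I → X) (V : ℕ → Set M), LocallyFinite V ∧ h 0 = f ∧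
      (∀ i, Continuous (F i)) ∧ (∀ i x, F i (x, 0) = h i x) ∧
      (∀ i x, F i (x, 1) = h (i + 1) x) ∧ (∀ i, ∀ x ∉ V i, ∀ t, F i (x, t) = h i x) ∧
      (∀ i, ∀ a ∈ A, ∀ t, F i (a, t) = f a) ∧ ∀ x, ∀ᶠ i in atTop, ContMDiffAt IM IX n (h i) x := by
  obtain ⟨c, χ, hχ, hχ01, hχc, hχO, hχlf, hχ1⟩ := exists_seq_smoothBump_subordinate IM
    (fun x => f ⁻¹' (extChartAt IX (f x)).source)
    fun x => hf.continuousAt.preimage_mem_nhds (extChartAt_source_mem_nhds (f x))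
  let Ω : Set (M × X) :=
    {p | ∀ i, p.1 ∈ tsupport (χ i) → p.2 ∈ (extChartAt IX (f (c i))).source}
  have hΩ : IsOpen Ω := isOpen_setOf_forall_mem_imp_mem hχlf (fun _ => isClosed_tsupport _)
    fun _ => isOpen_extChartAt_source _
  let Good (i : ℕ) (h : M → X) : Prop := Continuous h ∧ (∀ x, (x, h x) ∈ Ω) ∧ EqOn h f A ∧
    ∀ x, (x ∈ U ∨ ∃ j < i, χ j =ᶠ[𝓝 x] 1) → ContMDiffAt IM IX n h x
  have hgood₀ : Good 0 f := by
    refine ⟨hf, fun x i hx => hχO i hx, fun _ _ => rfl, ?_⟩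
    rintro x (hx | ⟨j, hj, -⟩)
    exacts [hfU.contMDiffAt (hU.mem_nhds hx), absurd hj j.not_lt_zero]
  have hstep : ∀ i h, Good i h → ∃ F : M × I → X, (Continuous F ∧ (∀ x, F (x, 0) = h x) ∧
      (∀ x ∉ tsupport (χ i), ∀ t, F (x, t) = h x) ∧ ∀ a ∈ A, ∀ t, F (a, t) = h a) ∧
      Good (i + 1) fun x => F (x, 1) := by
    rintro i h ⟨hh, hhΩ, hhA, hhsm⟩
    obtain ⟨F, hFc, hF0, hFΩ, hFsm, hFsm1, hFA, hFV⟩ := exists_homotopy_contMDiffAt_of_bump hΩ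
      hh hhΩ hA hU hAU (fun x hx => (hhsm x (.inl hx)).contMDiffWithinAt) (f (c i))
      ((hχ i).of_le (mod_cast le_top)) (hχ01 i) (hχc i) fun x hx => hhΩ x i hx
    refine ⟨F, ⟨hFc, hF0, hFV, hFA⟩, hFc.comp (continuous_id.prodMk continuous_const), hFΩ,
      fun a ha => (hFA a ha 1).trans (hhA ha), ?_⟩
    rintro x (hx | ⟨j, hj, hxj⟩)
    · exact hFsm x (hhsm x (.inl hx))
    · rcases Nat.lt_succ_iff_lt_or_eq.1 hj with hj | rfl
      · exact hFsm x (hhsm x (.inr ⟨j, hj, hxj⟩))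
      · exact hFsm1 x hxj
  obtain ⟨h, F, h₀, hseq⟩ :=
    exists_seq_of_forall_exists_step (fun F : M × I → X => fun x => F (x, 1)) hgood₀ hstep
  choose hgood hF hsucc using hseq
  choose hFc hF0 hFV hFA using hF
  refine ⟨h, F, fun i => tsupport (χ i), hχlf, h₀, hFc, hF0, fun i x => by rw [hsucc], hFV,
    fun i a ha t => (hFA i a ha t).trans ((hgood i).2.2.1 ha), fun x => ?_⟩
  obtain ⟨j, hj⟩ := hχ1 x
  filter_upwards [eventually_gt_atTop j] with i hi
  exact (hgood i).2.2.2 x (.inr ⟨j, hi, hj⟩)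

end Manifold

theorem whitney_approx_manifold_rel_general
    {E : Type*} [NormedAddCommGroup E] [NormedSpace ℝ E] [FiniteDimensional ℝ E]
    {H : Type*} [TopologicalSpace H] (IM : ModelWithCorners ℝ E H)
    {M : Type*} [TopologicalSpace M] [ChartedSpace H M] [IsManifold IM (⊤ : ℕ∞) M]
    [T2Space M] [SecondCountableTopology M]
    {E' : Type*} [NormedAddCommGroup E'] [NormedSpace ℝ E']
    {H' : Type*} [TopologicalSpace H'] (IX : ModelWithCorners ℝ E' H') [IX.Boundaryless]
    {X : Type*} [TopologicalSpace X] [ChartedSpace H' X] [IsManifold IX (⊤ : ℕ∞) X]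
    (f : M → X) (hf : Continuous f)
    (A : Set M) (hA : IsClosed A)
    (U : Set M) (hU : IsOpen U) (hAU : A ⊆ U) (hfU : ContMDiffOn IM IX (⊤ : ℕ∞) f U) :
    ∃ g : M → X, ContMDiff IM IX (⊤ : ℕ∞) g ∧ (∀ a ∈ A, g a = f a) ∧
      ∃ Hh : M × unitInterval → X, Continuous Hh ∧
        (∀ x : M, Hh (x, 0) = f x) ∧ (∀ x : M, Hh (x, 1) = g x) ∧
        (∀ a ∈ A, ∀ t : unitInterval, Hh (a, t) = f a) := by
  have := Manifold.locallyCompact_of_finiteDimensional (M := M) IM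
  rcases isEmpty_or_nonempty M with _ | _
  · exact ⟨f, fun x => isEmptyElim x, fun _ _ => rfl, fun p => f p.1, hf.comp continuous_fst,
      fun _ => rfl, fun _ => rfl, fun _ _ _ => rfl⟩
  obtain ⟨h, F, V, hV, rfl, hFc, hF0, hF1, hFV, hFA, hsmooth⟩ :=
    exists_seq_homotopy_contMDiffAt hf hA hU hAU hfU
  obtain ⟨Hh, hHc, hH0, hH1, hHrel⟩ :=
    exists_homotopy_to_limit_of_locallyFinite hV hFc hF0 hF1 hFV
  have hrel : ∀ a ∈ A, ∀ t, Hh (a, t) = h 0 a := fun a ha => hHrel a fun i t => hFA i a ha t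
  refine ⟨fun x => Hh (x, 1), fun x => ?_, fun a ha => hrel a ha 1, Hh, hHc, hH0, fun _ => rfl,
    hrel⟩
  obtain ⟨i, hi, hsm⟩ := ((hH1 x).and (hsmooth x)).exists
  exact hsm.congr_of_eventuallyEq hi.symm

/-- Whitney Approximation for Manifolds, relative version: a continuous map
between smooth manifolds that is smooth (`C^∞`) on an open neighbourhood of a
closed set `A` is homotopic, relative to `A`, to a smooth map agreeing with it
on `A`. -/
theorem whitney_approx_manifold_rel
    {E : Type*} [NormedAddCommGroup E] [NormedSpace ℝ E] [FiniteDimensional ℝ E]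
    {H : Type*} [TopologicalSpace H] (IM : ModelWithCorners ℝ E H) [IM.Boundaryless]
    {M : Type*} [TopologicalSpace M] [ChartedSpace H M] [IsManifold IM (⊤ : ℕ∞) M]
    [T2Space M] [SecondCountableTopology M]
    {E' : Type*} [NormedAddCommGroup E'] [NormedSpace ℝ E'] [FiniteDimensional ℝ E']
    {H' : Type*} [TopologicalSpace H'] (IX : ModelWithCorners ℝ E' H') [IX.Boundaryless]
    {X : Type*} [TopologicalSpace X] [ChartedSpace H' X] [IsManifold IX (⊤ : ℕ∞) X]
    [T2Space X] [SecondCountableTopology X]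
    (f : M → X) (hf : Continuous f)
    (A : Set M) (hA : IsClosed A)
    (U : Set M) (hU : IsOpen U) (hAU : A ⊆ U) (hfU : ContMDiffOn IM IX (⊤ : ℕ∞) f U) :
    ∃ g : M → X, ContMDiff IM IX (⊤ : ℕ∞) g ∧ (∀ a ∈ A, g a = f a) ∧
      ∃ Hh : M × unitInterval → X, Continuous Hh ∧
        (∀ x : M, Hh (x, 0) = f x) ∧ (∀ x : M, Hh (x, 1) = g x) ∧
        (∀ a ∈ A, ∀ t : unitInterval, Hh (a, t) = f a) :=
  whitney_approx_manifold_rel_general IM IX f hf A hA U hU hAU hfU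
end

section
/- Let N be a smooth manifold, n ≥ 1, A ⊆ N a closed set, and f : N → ℝⁿ a continuous map that is smooth on A, i.e., C^∞ on some open set U ⊇ A. Then for every continuous function κ : N → ℝ with κ(x) > 0 for all x, there exists a C^∞ map g : N → ℝⁿ such that ‖f(x) − g(x)‖ < κ(x) for every x ∈ N and g(a) = f(a) for every a ∈ A. -/
open scoped Manifold

/-!
The admissible values at `x` — points of the open ball of radius `κ x` about `f x`, and only
`f x` itself when `x ∈ A` — form a convex set. Locally such values are chosen smoothly: by `f`
on `U`, and by the constant `f x` near a point `x ∉ U`, which has a neighbourhood missing the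
closed set `A`. A smooth partition of unity glues these local choices, and convexity keeps the
glued map admissible.
-/

open Set Metric Filter Topology
open scoped ContDiff

theorem convex_setOf_imp_eq {𝕜 F : Type*} [Semiring 𝕜] [PartialOrder 𝕜] [AddCommMonoid F]
    [Module 𝕜 F] (p : Prop) (c : F) : Convex 𝕜 {y | p → y = c} := by
  by_cases hp : p
  · simpa only [hp, true_imp_iff, ofPred_eq_eq_singleton] using convex_singleton c
  · simpa only [hp, false_imp_iff, ofPred_true] using convex_univ

section

variable {E : Type*} [NormedAddCommGroup E] [NormedSpace ℝ E] [FiniteDimensional ℝ E]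
  {H : Type*} [TopologicalSpace H] (I : ModelWithCorners ℝ E H)
  {M : Type*} [TopologicalSpace M] [ChartedSpace H M] [IsManifold I ∞ M]
  [T2Space M] [SigmaCompactSpace M]
  {F : Type*} [NormedAddCommGroup F] [NormedSpace ℝ F] {n : ℕ∞}

theorem exists_contMDiffMap_dist_lt_eqOn_of_contMDiffOn {f : M → F} (hf : Continuous f)
    {A U : Set M} (hA : IsClosed A) (hU : IsOpen U) (hAU : A ⊆ U)
    (hfU : ContMDiffOn I 𝓘(ℝ, F) n f U) {κ : M → ℝ} (hκ : Continuous κ)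
    (hκpos : ∀ x, 0 < κ x) :
    ∃ g : C^n⟮I, M; 𝓘(ℝ, F), F⟯, (∀ x, dist (f x) (g x) < κ x) ∧ EqOn g f A := by
  set t : M → Set F := fun x => ball (f x) (κ x) ∩ {y | x ∈ A → y = f x}
  have ht : ∀ x, Convex ℝ (t x) := fun x =>
    (convex_ball _ _).inter (convex_setOf_imp_eq _ _)
  have hloc : ∀ x, ∃ V ∈ 𝓝 x, ∃ g : M → F, ContMDiffOn I 𝓘(ℝ, F) n g V ∧ ∀ y ∈ V, g y ∈ t y := by
    intro x
    by_cases hxU : x ∈ U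
    · exact ⟨U, hU.mem_nhds hxU, f, hfU, fun y _ => ⟨mem_ball_self (hκpos y), fun _ => rfl⟩⟩
    have hnear : ∀ᶠ y in 𝓝 x, dist (f x) (f y) < κ y :=
      (continuous_const.dist hf).continuousAt.eventually_lt hκ.continuousAt
        (by simpa using hκpos x)
    have hoff : ∀ᶠ y in 𝓝 x, y ∉ A := hA.isOpen_compl.mem_nhds fun hxA => hxU (hAU hxA)
    refine ⟨_, hnear.and hoff, fun _ => f x, contMDiffOn_const, fun y hy => ?_⟩
    exact ⟨mem_ball.mpr hy.1, fun hyA => absurd hyA hy.2⟩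
  obtain ⟨g, hg⟩ := exists_contMDiffMap_forall_mem_convex_of_local I ht hloc
  exact ⟨g, fun x => mem_ball'.mp (hg x).1, fun a ha => (hg a).2 ha⟩

end

theorem whitney_approx_euclidean_rel_general
    {E : Type*} [NormedAddCommGroup E] [NormedSpace ℝ E] [FiniteDimensional ℝ E]
    {H : Type*} [TopologicalSpace H] (IN : ModelWithCorners ℝ E H)
    {N : Type*} [TopologicalSpace N] [ChartedSpace H N] [IsManifold IN (⊤ : ℕ∞) N]
    [T2Space N] [SecondCountableTopology N]
    (n : ℕ)
    (A : Set N) (hA : IsClosed A)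
    (f : N → EuclideanSpace ℝ (Fin n)) (hf : Continuous f)
    (U : Set N) (hU : IsOpen U) (hAU : A ⊆ U)
    (hfU : ContMDiffOn IN 𝓘(ℝ, EuclideanSpace ℝ (Fin n)) (⊤ : ℕ∞) f U)
    (κ : N → ℝ) (hκ : Continuous κ) (hκpos : ∀ x, 0 < κ x) :
    ∃ g : N → EuclideanSpace ℝ (Fin n),
      ContMDiff IN 𝓘(ℝ, EuclideanSpace ℝ (Fin n)) (⊤ : ℕ∞) g ∧
      (∀ x : N, ‖f x - g x‖ < κ x) ∧
      (∀ a ∈ A, g a = f a) := by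
  have : LocallyCompactSpace N := Manifold.locallyCompact_of_finiteDimensional IN
  have : SigmaCompactSpace N := sigmaCompactSpace_of_locallyCompact_secondCountable
  obtain ⟨g, hgf, hgA⟩ :=
    exists_contMDiffMap_dist_lt_eqOn_of_contMDiffOn IN hf hA hU hAU hfU hκ hκpos
  exact ⟨g, g.contMDiff, fun x => dist_eq_norm (f x) (g x) ▸ hgf x, hgA⟩

/-- Whitney Approximation Theorem, relative version: a continuous map from a
smooth manifold to `ℝⁿ` which is `C^∞` on an open neighbourhood of a closed set
`A` can be approximated within any positive continuous error function `κ` by a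
`C^∞` map agreeing with it on `A`. -/
theorem whitney_approx_euclidean_rel
    {E : Type*} [NormedAddCommGroup E] [NormedSpace ℝ E] [FiniteDimensional ℝ E]
    {H : Type*} [TopologicalSpace H] (IN : ModelWithCorners ℝ E H) [IN.Boundaryless]
    {N : Type*} [TopologicalSpace N] [ChartedSpace H N] [IsManifold IN (⊤ : ℕ∞) N]
    [T2Space N] [SecondCountableTopology N]
    (n : ℕ) (hn : 1 ≤ n)
    (A : Set N) (hA : IsClosed A)
    (f : N → EuclideanSpace ℝ (Fin n)) (hf : Continuous f)
    (U : Set N) (hU : IsOpen U) (hAU : A ⊆ U)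
    (hfU : ContMDiffOn IN 𝓘(ℝ, EuclideanSpace ℝ (Fin n)) (⊤ : ℕ∞) f U)
    (κ : N → ℝ) (hκ : Continuous κ) (hκpos : ∀ x, 0 < κ x) :
    ∃ g : N → EuclideanSpace ℝ (Fin n),
      ContMDiff IN 𝓘(ℝ, EuclideanSpace ℝ (Fin n)) (⊤ : ℕ∞) g ∧
      (∀ x : N, ‖f x - g x‖ < κ x) ∧
      (∀ a ∈ A, g a = f a) :=
  whitney_approx_euclidean_rel_general IN n A hA f hf U hU hAU hfU κ hκ hκpos
end
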